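/- For every real β > 0 and every x ∈ (0,1), the SL(2,ℝ) collinear block k_β satisfies the collinear (SL(2,ℝ) Casimir) differential equation (1−x)·x²·k_β''(x) − x²·k_β'(x) = β(β−1)·k_β(x). -/

import Mathlib

open Real

/-- Pochhammer symbol `(a)_n = a (a+1) ⋯ (a+n-1)`. -/
noncomputable def poch (a : ℝ) (n : ℕ) : ℝ := (ascPochhammer ℝ n).eval a

/-- Gauss hypergeometric series `₂F₁(a,b;c;x)`. -/
noncomputable def F21 (a b c x : ℝ) : ℝ :=
  ∑' n : ℕ, poch a n * poch b n / (poch c n * (n.factorial : ℝ)) * x ^ n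

/-- The SL(2,ℝ) collinear conformal block `k_β(x) = x^β ₂F₁(β,β;2β;x)`. -/
noncomputable def kblock (β x : ℝ) : ℝ := x ^ β * F21 β β (2 * β) x

noncomputable def hc (β : ℝ) (n : ℕ) : ℝ :=
  poch β n * poch β n / (poch (2 * β) n * (n.factorial : ℝ))

lemma poch_pos {a : ℝ} (ha : 0 < a) (n : ℕ) : 0 < poch a n :=
  ascPochhammer_pos n a ha

lemma hc_pos {β : ℝ} (hβ : 0 < β) (n : ℕ) : 0 < hc β n := by
  have h1 := poch_pos hβ n
  have h2 := poch_pos (by linarith : (0:ℝ) < 2*β) n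
  have h3 : (0:ℝ) < n.factorial := by exact_mod_cast n.factorial_pos
  exact div_pos (mul_pos h1 h1) (mul_pos h2 h3)

lemma poch_succ (a : ℝ) (n : ℕ) : poch a (n+1) = poch a n * (a + n) := by
  simp [poch, ascPochhammer_succ_eval]

lemma hc_rec {β : ℝ} (hβ : 0 < β) (n : ℕ) :
    hc β (n+1) * ((n+1 : ℝ) * (2*β + n)) = hc β n * (β + n)^2 := by
  have h2 : (0:ℝ) < poch (2*β) n := poch_pos (by linarith) n
  have h3 : (0:ℝ) < (n.factorial : ℝ) := by exact_mod_cast n.factorial_pos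
  have h4 : (0:ℝ) < 2*β + n := by positivity
  unfold hc
  rw [poch_succ, poch_succ, Nat.factorial_succ]
  push_cast
  field_simp

lemma hc_antitone {β : ℝ} (hβ : 0 < β) {n : ℕ} (hn : β^2 ≤ n) :
    hc β (n+1) ≤ hc β n := by
  have h4 : (0:ℝ) < (n+1 : ℝ) * (2*β + n) := by positivity
  have hr := hc_rec hβ n
  have hb : hc β n * (β + n)^2 ≤ hc β n * ((n+1 : ℝ) * (2*β + n)) := by
    apply mul_le_mul_of_nonneg_left _ (hc_pos hβ n).le
    nlinarith
  rw [← hr] at hb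
  exact le_of_mul_le_mul_right hb h4

lemma hc_le {β : ℝ} (hβ : 0 < β) {n : ℕ} (hn : ⌈β^2⌉₊ ≤ n) :
    hc β n ≤ hc β ⌈β^2⌉₊ := by
  induction n, hn using Nat.le_induction with
  | base => exact le_refl _
  | succ n hn ih =>
    refine le_trans (hc_antitone hβ ?_) ih
    exact le_trans (Nat.le_ceil _) (by exact_mod_cast hn)

lemma master_summable {β t : ℝ} (hβ : 0 < β) (ht0 : 0 ≤ t) (ht : t < 1) :
    Summable (fun n : ℕ => hc β n * ((n:ℝ)+1)^2 * t^n) := by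
  have hs : Summable (fun n : ℕ => hc β ⌈β^2⌉₊ * (((n:ℝ)+1)^2 * t^n)) := by
    apply Summable.mul_left
    have h1 := summable_pow_mul_geometric_of_norm_lt_one (R := ℝ) 2 (by rwa [norm_of_nonneg ht0])
    have h2 := summable_pow_mul_geometric_of_norm_lt_one (R := ℝ) 1 (by rwa [norm_of_nonneg ht0])
    have h3 := summable_pow_mul_geometric_of_norm_lt_one (R := ℝ) 0 (by rwa [norm_of_nonneg ht0])
    have := (h1.add ((h2.mul_left 2))).add h3
    apply this.congr
    intro n
    push_cast
    ring
  apply Summable.of_norm_bounded_eventually_nat hs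
  filter_upwards [Filter.eventually_ge_atTop ⌈β^2⌉₊] with n hn
  have h0 : 0 ≤ ((n:ℝ)+1)^2 * t^n := mul_nonneg (by positivity) (pow_nonneg ht0 n)
  rw [Real.norm_eq_abs, abs_of_nonneg (mul_nonneg (mul_nonneg (hc_pos hβ n).le (by positivity)) (pow_nonneg ht0 n) : (0:ℝ) ≤ hc β n * ((n:ℝ)+1)^2 * t^n)]
  calc hc β n * ((n:ℝ)+1)^2 * t^n = hc β n * (((n:ℝ)+1)^2 * t^n) := by ring
    _ ≤ hc β ⌈β^2⌉₊ * (((n:ℝ)+1)^2 * t^n) :=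
        mul_le_mul_of_nonneg_right (hc_le hβ hn) h0

lemma summable_aux {β t : ℝ} (hβ : 0 < β) (ht0 : 0 ≤ t) (ht : t < 1)
    (q : ℕ → ℝ) (K : ℝ) (hq : ∀ n : ℕ, |q n| ≤ K * ((n:ℝ)+1)^2) :
    Summable (fun n : ℕ => hc β n * q n * t^n) := by
  apply Summable.of_norm_bounded (g := fun n => K * (hc β n * ((n:ℝ)+1)^2 * t^n))
    ((master_summable hβ ht0 ht).mul_left K)
  intro n
  rw [Real.norm_eq_abs, abs_mul, abs_mul, abs_of_nonneg (hc_pos hβ n).le,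
    abs_of_nonneg (pow_nonneg ht0 n)]
  calc hc β n * |q n| * t^n ≤ hc β n * (K * ((n:ℝ)+1)^2) * t^n := by
        apply mul_le_mul_of_nonneg_right _ (pow_nonneg ht0 n)
        exact mul_le_mul_of_nonneg_left (hq n) (hc_pos hβ n).le
    _ = K * (hc β n * ((n:ℝ)+1)^2 * t^n) := by ring

noncomputable def cb0 (β : ℝ) (n : ℕ) (y : ℝ) : ℝ := hc β n * y ^ (β + n)
noncomputable def cb1 (β : ℝ) (n : ℕ) (y : ℝ) : ℝ := hc β n * (β + n) * y ^ (β + n - 1)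
noncomputable def cb2 (β : ℝ) (n : ℕ) (y : ℝ) : ℝ :=
  hc β n * (β + n) * (β + n - 1) * y ^ (β + n - 2)

lemma cb0_hasDeriv (β : ℝ) (n : ℕ) {y : ℝ} (hy : y ≠ 0) :
    HasDerivAt (cb0 β n) (cb1 β n y) y := by
  have h : HasDerivAt (fun y => hc β n * y ^ (β + n)) (hc β n * ((β + n) * y ^ (β + n - 1))) y :=
    (Real.hasDerivAt_rpow_const (x := y) (p := β + n) (Or.inl hy)).const_mul (hc β n)
  convert h using 1
  · rfl
  unfold cb1; ring

lemma cb1_hasDeriv (β : ℝ) (n : ℕ) {y : ℝ} (hy : y ≠ 0) :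
    HasDerivAt (cb1 β n) (cb2 β n y) y := by
  have h : HasDerivAt (fun y => hc β n * (β + n) * y ^ (β + n - 1))
      (hc β n * (β + n) * ((β + n - 1) * y ^ (β + n - 1 - 1))) y :=
    (Real.hasDerivAt_rpow_const (x := y) (p := β + n - 1) (Or.inl hy)).const_mul
    (hc β n * (β + n))
  convert h using 1
  · rfl
  unfold cb2
  rw [show β + (n:ℝ) - 1 - 1 = β + (n:ℝ) - 2 by ring]
  ring

lemma pshift {y : ℝ} (hy : 0 < y) (p : ℝ) (k : ℕ) : y ^ p * y ^ k = y ^ (p + k) := by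
  rw [← Real.rpow_natCast y k, ← Real.rpow_add hy]

lemma kblock_eq_tsum {β : ℝ} (hβ : 0 < β) {y : ℝ} (hy : y ∈ Set.Ioo (0:ℝ) 1) :
    kblock β y = ∑' n, cb0 β n y := by
  have hy0 := hy.1
  unfold kblock F21
  rw [← tsum_mul_left]
  refine tsum_congr fun n => ?_
  unfold cb0
  rw [← pshift hy0 β n]
  unfold hc poch
  ring

lemma summable_cb0 {β : ℝ} (hβ : 0 < β) {t : ℝ} (ht0 : 0 < t) (ht : t < 1) :
    Summable (fun n => cb0 β n t) := by
  have h := (summable_aux hβ ht0.le ht (fun _ => 1) 1 (fun n => by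
    rw [abs_one]; nlinarith [Nat.cast_nonneg (α := ℝ) n])).mul_left (t ^ β)
  refine h.congr fun n => ?_
  unfold cb0
  rw [← pshift ht0 β n]; ring

lemma summable_cb1 {β : ℝ} (hβ : 0 < β) {t : ℝ} (ht0 : 0 < t) (ht : t < 1) :
    Summable (fun n => cb1 β n t) := by
  have h := (summable_aux hβ ht0.le ht (fun n => β + n) (β + 1) (fun n => by
    have hn : (0:ℝ) ≤ n := Nat.cast_nonneg n
    show |β + (n:ℝ)| ≤ (β + 1) * ((n:ℝ)+1)^2
    rw [abs_of_pos (by positivity)]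
    nlinarith [mul_nonneg hβ.le (mul_nonneg hn hn), mul_nonneg hβ.le hn, mul_nonneg hn hn])).mul_left (t ^ (β - 1))
  refine h.congr fun n => ?_
  unfold cb1
  rw [show β + (n:ℝ) - 1 = (β - 1) + (n:ℝ) by ring, ← pshift ht0 (β-1) n]; ring

lemma rpow_bound {a b y : ℝ} (ha : 0 < a) (hb : b ≤ 1) (hy : y ∈ Set.Ioo a b)
    (c : ℝ) (n : ℕ) : y ^ (c + n) ≤ max (a ^ c) 1 * b ^ n := by
  have hy0 : 0 < y := lt_trans ha hy.1
  rw [← pshift hy0 c n]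
  have h1 : y ^ c ≤ max (a ^ c) 1 := by
    rcases le_or_gt c 0 with h | h
    · exact le_trans (Real.rpow_le_rpow_of_nonpos ha hy.1.le h) (le_max_left _ _)
    · exact le_trans (Real.rpow_le_one hy0.le (le_trans hy.2.le hb) h.le) (le_max_right _ _)
  have h2 : y ^ n ≤ b ^ n := pow_le_pow_left₀ hy0.le hy.2.le n
  exact mul_le_mul h1 h2 (pow_nonneg hy0.le n) (le_trans zero_le_one (le_max_right _ _))


set_option maxHeartbeats 1600000 in
/-- for β > 0 and x ∈ (0,1), the block `k_β` satisfies the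
SL(2,ℝ) Casimir differential equation
`(1−x)·x²·k_β''(x) − x²·k_β'(x) = β(β−1)·k_β(x)`. -/
theorem collinear_casimir_eq (β : ℝ) (hβ : 0 < β) (x : ℝ) (hx : x ∈ Set.Ioo (0 : ℝ) 1) :
    (1 - x) * x ^ 2 * deriv (deriv (kblock β)) x - x ^ 2 * deriv (kblock β) x
      = β * (β - 1) * kblock β x := by
  obtain ⟨hx0, hx1⟩ := hx
  set a := x / 2 with ha_def
  set b := (x + 1) / 2 with hb_def
  have ha0 : 0 < a := by positivity
  have hax : a < x := by rw [ha_def]; linarith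
  have hxb : x < b := by rw [hb_def]; linarith
  have hb1 : b < 1 := by rw [hb_def]; linarith
  have hb0 : 0 < b := lt_trans (lt_trans ha0 hax) hxb
  have hxs : x ∈ Set.Ioo a b := ⟨hax, hxb⟩
  have hs_sub : Set.Ioo a b ⊆ Set.Ioo (0:ℝ) 1 :=
    fun y hy => ⟨lt_trans ha0 hy.1, lt_trans hy.2 hb1⟩
  set A1 := max (a ^ (β - 1)) 1 with hA1_def
  set A2 := max (a ^ (β - 2)) 1 with hA2_def
  have hA1 : (1:ℝ) ≤ A1 := le_max_right _ _
  have hA2 : (1:ℝ) ≤ A2 := le_max_right _ _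
  -- summable bounds for the derivative series
  have hu1 : Summable (fun n : ℕ => hc β n * ((β + 1) * ((n:ℝ) + 1) * A1) * b ^ n) := by
    refine summable_aux hβ hb0.le hb1 _ ((β + 1) * A1) fun n => ?_
    have hn : (0:ℝ) ≤ n := Nat.cast_nonneg n
    have hA1' : (0:ℝ) < A1 := lt_of_lt_of_le one_pos hA1
    rw [abs_of_pos (mul_pos (by positivity) hA1')]
    nlinarith [mul_nonneg (mul_nonneg hβ.le hn) hn, mul_nonneg hβ.le hn, mul_nonneg hn hn,
      mul_le_mul_of_nonneg_left hA1 (by positivity : (0:ℝ) ≤ (β+1)*((n:ℝ)+1))]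
  have hu2 : Summable (fun n : ℕ => hc β n * ((β + 1)^2 * ((n:ℝ) + 1)^2 * A2) * b ^ n) := by
    have hA2' : (0:ℝ) < A2 := lt_of_lt_of_le one_pos hA2
    refine summable_aux hβ hb0.le hb1 _ ((β + 1)^2 * A2) fun n => ?_
    rw [abs_of_pos (by positivity)]
    apply le_of_eq; ring
  -- bounds on the term derivatives over Ioo a b
  have hbound1 : ∀ (n : ℕ) (y : ℝ), y ∈ Set.Ioo a b →
      ‖cb1 β n y‖ ≤ hc β n * ((β + 1) * ((n:ℝ) + 1) * A1) * b ^ n := by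
    intro n y hy
    have hy0 : 0 < y := lt_trans ha0 hy.1
    have hn : (0:ℝ) ≤ n := Nat.cast_nonneg n
    have hrp : y ^ (β + (n:ℝ) - 1) ≤ A1 * b ^ n := by
      rw [show β + (n:ℝ) - 1 = (β - 1) + (n:ℝ) by ring]
      exact rpow_bound ha0 hb1.le hy (β - 1) n
    have hA1' : (0:ℝ) < A1 := lt_of_lt_of_le one_pos hA1
    unfold cb1
    rw [Real.norm_eq_abs, abs_of_nonneg (mul_nonneg (mul_nonneg (hc_pos hβ n).le
      (by positivity)) (Real.rpow_nonneg hy0.le _))]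
    calc hc β n * (β + n) * y ^ (β + (n:ℝ) - 1)
        ≤ hc β n * ((β + 1) * ((n:ℝ) + 1)) * (A1 * b ^ n) := by
          apply mul_le_mul
          · apply mul_le_mul_of_nonneg_left _ (hc_pos hβ n).le
            nlinarith [mul_nonneg hβ.le hn]
          · exact hrp
          · exact Real.rpow_nonneg hy0.le _
          · exact mul_nonneg (hc_pos hβ n).le (by positivity)
      _ = hc β n * ((β + 1) * ((n:ℝ) + 1) * A1) * b ^ n := by ring
  have hbound2 : ∀ (n : ℕ) (y : ℝ), y ∈ Set.Ioo a b →
      ‖cb2 β n y‖ ≤ hc β n * ((β + 1)^2 * ((n:ℝ) + 1)^2 * A2) * b ^ n := by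
    intro n y hy
    have hy0 : 0 < y := lt_trans ha0 hy.1
    have hn : (0:ℝ) ≤ n := Nat.cast_nonneg n
    have hrp : y ^ (β + (n:ℝ) - 2) ≤ A2 * b ^ n := by
      rw [show β + (n:ℝ) - 2 = (β - 2) + (n:ℝ) by ring]
      exact rpow_bound ha0 hb1.le hy (β - 2) n
    have habs : |β + (n:ℝ) - 1| ≤ (β + 1) * ((n:ℝ) + 1) := by
      rw [abs_le]; constructor <;> nlinarith [mul_nonneg hβ.le hn]
    unfold cb2
    rw [Real.norm_eq_abs, abs_mul, abs_mul, abs_mul,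
      abs_of_nonneg (hc_pos hβ n).le, abs_of_nonneg (by positivity : (0:ℝ) ≤ β + (n:ℝ)),
      abs_of_nonneg (Real.rpow_nonneg hy0.le _)]
    calc hc β n * (β + n) * |β + (n:ℝ) - 1| * y ^ (β + (n:ℝ) - 2)
        ≤ hc β n * ((β + 1) * ((n:ℝ) + 1)) * ((β + 1) * ((n:ℝ) + 1)) * (A2 * b ^ n) := by
          apply mul_le_mul
          · apply mul_le_mul
            · apply mul_le_mul_of_nonneg_left _ (hc_pos hβ n).le
              nlinarith [mul_nonneg hβ.le hn]
            · exact habs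
            · exact abs_nonneg _
            · exact mul_nonneg (hc_pos hβ n).le (by positivity)
          · exact hrp
          · exact Real.rpow_nonneg hy0.le _
          · exact mul_nonneg (mul_nonneg (hc_pos hβ n).le (by positivity)) (by positivity)
      _ = hc β n * ((β + 1)^2 * ((n:ℝ) + 1)^2 * A2) * b ^ n := by ring
  -- derivatives of the block via term-by-term differentiation
  have hD1 : ∀ y ∈ Set.Ioo a b, HasDerivAt (kblock β) (∑' n, cb1 β n y) y := by
    intro y hy
    have h := hasDerivAt_tsum_of_isPreconnected hu1 isOpen_Ioo isPreconnected_Ioo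
      (fun n z hz => cb0_hasDeriv β n (ne_of_gt (lt_trans ha0 hz.1)))
      hbound1 hxs (summable_cb0 hβ hx0 hx1) hy
    apply h.congr_of_eventuallyEq
    filter_upwards [isOpen_Ioo.mem_nhds (hs_sub hy)] with z hz
    exact kblock_eq_tsum hβ hz
  have hD2 : ∀ y ∈ Set.Ioo a b,
      HasDerivAt (fun z => ∑' n, cb1 β n z) (∑' n, cb2 β n y) y := by
    intro y hy
    exact hasDerivAt_tsum_of_isPreconnected hu2 isOpen_Ioo isPreconnected_Ioo
      (fun n z hz => cb1_hasDeriv β n (ne_of_gt (lt_trans ha0 hz.1)))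
      hbound2 hxs (summable_cb1 hβ hx0 hx1) hy
  have hd1x : deriv (kblock β) x = ∑' n, cb1 β n x := (hD1 x hxs).deriv
  have hdd : deriv (deriv (kblock β)) x = ∑' n, cb2 β n x := by
    have he : deriv (kblock β) =ᶠ[nhds x] (fun y => ∑' n, cb1 β n y) := by
      filter_upwards [isOpen_Ioo.mem_nhds hxs] with z hz
      exact (hD1 z hz).deriv
    rw [he.deriv_eq]
    exact (hD2 x hxs).deriv
  rw [hdd, hd1x, kblock_eq_tsum hβ ⟨hx0, hx1⟩]
  -- summabilities of the power-series pieces at x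
  have habs2 : ∀ n : ℕ, |(β + (n:ℝ)) * (β + (n:ℝ) - 1)| ≤ (β + 1)^2 * ((n:ℝ) + 1)^2 := by
    intro n
    have hn : (0:ℝ) ≤ n := Nat.cast_nonneg n
    rw [abs_mul, abs_of_nonneg (by positivity : (0:ℝ) ≤ β + (n:ℝ))]
    have h1 : β + (n:ℝ) ≤ (β + 1) * ((n:ℝ) + 1) := by nlinarith [mul_nonneg hβ.le hn]
    have h2 : |β + (n:ℝ) - 1| ≤ (β + 1) * ((n:ℝ) + 1) := by
      rw [abs_le]; constructor <;> nlinarith [mul_nonneg hβ.le hn]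
    calc (β + (n:ℝ)) * |β + (n:ℝ) - 1| ≤ ((β+1)*((n:ℝ)+1)) * ((β+1)*((n:ℝ)+1)) :=
          mul_le_mul h1 h2 (abs_nonneg _) (by positivity)
      _ = (β + 1)^2 * ((n:ℝ) + 1)^2 := by ring
  have sa : Summable (fun n : ℕ => hc β n * ((β + n) * (β + n - 1)) * x ^ n) :=
    summable_aux hβ hx0.le hx1 _ ((β + 1)^2) habs2
  have se : Summable (fun n : ℕ => hc β n * (β * (β - 1)) * x ^ n) := by
    refine summable_aux hβ hx0.le hx1 _ (β * (β + 1)) fun n => ?_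
    have hn : (0:ℝ) ≤ n := Nat.cast_nonneg n
    show |β * (β - 1)| ≤ β * (β + 1) * ((n:ℝ) + 1)^2
    rw [abs_mul, abs_of_pos hβ]
    have h2 : |β - 1| ≤ β + 1 := by rw [abs_le]; constructor <;> linarith
    have h3 : β * |β - 1| ≤ β * (β + 1) := mul_le_mul_of_nonneg_left h2 hβ.le
    have h5 : (1:ℝ) ≤ ((n:ℝ) + 1)^2 := by nlinarith
    have h4 : β * (β + 1) ≤ β * (β + 1) * ((n:ℝ) + 1)^2 :=
      le_mul_of_one_le_right (by positivity) h5
    linarith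
  have sδ : Summable (fun n : ℕ =>
      hc β n * ((β + n) * (β + n - 1) - β * (β - 1)) * x ^ n) := by
    refine summable_aux hβ hx0.le hx1 _ (2 * β + 2) fun n => ?_
    have hn : (0:ℝ) ≤ n := Nat.cast_nonneg n
    show |(β + (n:ℝ)) * (β + (n:ℝ) - 1) - β * (β - 1)| ≤ (2*β + 2) * ((n:ℝ) + 1)^2
    have hq : (0:ℝ) ≤ (β + (n:ℝ)) * (β + (n:ℝ) - 1) - β * (β - 1) := by
      rcases Nat.eq_zero_or_pos n with h | h
      · subst h; exact le_of_eq (by push_cast; ring)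
      · have h1 : (1:ℝ) ≤ n := by exact_mod_cast h
        have h2 : (0:ℝ) ≤ (n:ℝ) * ((n:ℝ) - 1) := mul_nonneg hn (by linarith)
        have h3 : (0:ℝ) ≤ β * (n:ℝ) := mul_nonneg hβ.le hn
        have h4 : (β + (n:ℝ)) * (β + (n:ℝ) - 1) - β * (β - 1)
            = (n:ℝ) * ((n:ℝ) - 1) + 2 * (β * (n:ℝ)) := by ring
        linarith
    rw [abs_of_nonneg hq]
    have h2 : (0:ℝ) ≤ (n:ℝ) * (n:ℝ) := mul_nonneg hn hn
    have h3 : (0:ℝ) ≤ β * (n:ℝ) := mul_nonneg hβ.le hn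
    have h4 : (0:ℝ) ≤ β * ((n:ℝ) * (n:ℝ)) := mul_nonneg hβ.le h2
    nlinarith [h2, h3, h4]
  have sc : Summable (fun n : ℕ => hc β n * (β + n) * x ^ (n + 1)) := by
    have h := (summable_aux hβ hx0.le hx1 (fun n => β + n) (β + 1) (fun n => by
      have hn : (0:ℝ) ≤ n := Nat.cast_nonneg n
      show |β + (n:ℝ)| ≤ (β + 1) * ((n:ℝ)+1)^2
      rw [abs_of_pos (by positivity)]
      nlinarith [mul_nonneg (mul_nonneg hβ.le hn) hn, mul_nonneg hβ.le hn,
        mul_nonneg hn hn])).mul_left x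
    exact h.congr fun n => by ring
  have sd : Summable (fun n : ℕ => hc β n * ((β + n) * (β + n - 1)) * x ^ (n + 1)) := by
    have h := (summable_aux hβ hx0.le hx1 (fun n => (β + n) * (β + n - 1))
      ((β + 1)^2) habs2).mul_left x
    exact h.congr fun n => by ring
  -- rewrite the three tsums as x ^ β times plain power series
  have e' : ∀ n : ℕ, x ^ β * x ^ n = x ^ (β + (n:ℝ)) := fun n => pshift hx0 β n
  have E2 : x ^ 2 * (∑' n, cb2 β n x)
      = x ^ β * ∑' n, hc β n * ((β + n) * (β + n - 1)) * x ^ n := by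
    rw [← tsum_mul_left, ← tsum_mul_left]
    refine tsum_congr fun n => ?_
    unfold cb2
    have e := pshift hx0 (β + (n:ℝ) - 2) 2
    rw [show β + (n:ℝ) - 2 + ((2:ℕ):ℝ) = β + (n:ℝ) by push_cast; ring] at e
    linear_combination (hc β n * (β + (n:ℝ)) * (β + (n:ℝ) - 1)) * e
      - (hc β n * ((β + (n:ℝ)) * (β + (n:ℝ) - 1))) * e' n
  have E3 : x ^ 2 * x * (∑' n, cb2 β n x)
      = x ^ β * ∑' n, hc β n * ((β + n) * (β + n - 1)) * x ^ (n + 1) := by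
    rw [← tsum_mul_left, ← tsum_mul_left]
    refine tsum_congr fun n => ?_
    unfold cb2
    have e := pshift hx0 (β + (n:ℝ) - 2) 3
    rw [show β + (n:ℝ) - 2 + ((3:ℕ):ℝ) = β + ((n:ℝ) + 1) by push_cast; ring] at e
    have e2 := pshift hx0 β (n + 1)
    rw [show ((n + 1 : ℕ):ℝ) = (n:ℝ) + 1 by push_cast; ring] at e2
    linear_combination (hc β n * (β + (n:ℝ)) * (β + (n:ℝ) - 1)) * e
      - (hc β n * ((β + (n:ℝ)) * (β + (n:ℝ) - 1))) * e2
  have E1 : x ^ 2 * (∑' n, cb1 β n x)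
      = x ^ β * ∑' n, hc β n * (β + n) * x ^ (n + 1) := by
    rw [← tsum_mul_left, ← tsum_mul_left]
    refine tsum_congr fun n => ?_
    unfold cb1
    have e := pshift hx0 (β + (n:ℝ) - 1) 2
    rw [show β + (n:ℝ) - 1 + ((2:ℕ):ℝ) = β + ((n:ℝ) + 1) by push_cast; ring] at e
    have e2 := pshift hx0 β (n + 1)
    rw [show ((n + 1 : ℕ):ℝ) = (n:ℝ) + 1 by push_cast; ring] at e2
    linear_combination (hc β n * (β + (n:ℝ))) * e - (hc β n * (β + (n:ℝ))) * e2
  have E0 : β * (β - 1) * (∑' n, cb0 β n x)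
      = x ^ β * ∑' n, hc β n * (β * (β - 1)) * x ^ n := by
    rw [← tsum_mul_left, ← tsum_mul_left]
    refine tsum_congr fun n => ?_
    unfold cb0
    linear_combination (- hc β n * (β * (β - 1))) * e' n
  -- the key power-series identity coming from the hypergeometric recurrence
  have key : (∑' n, hc β n * ((β + n) * (β + n - 1)) * x ^ n)
        - (∑' n, hc β n * (β * (β - 1)) * x ^ n)
      = (∑' n, hc β n * ((β + n) * (β + n - 1)) * x ^ (n + 1))
        + (∑' n, hc β n * (β + n) * x ^ (n + 1)) := by
    rw [← Summable.tsum_sub sa se, ← Summable.tsum_add sd sc]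
    have h1 : ∀ n : ℕ, hc β n * ((β + n) * (β + n - 1)) * x ^ n
        - hc β n * (β * (β - 1)) * x ^ n
        = hc β n * ((β + n) * (β + n - 1) - β * (β - 1)) * x ^ n := fun n => by ring
    rw [tsum_congr h1, Summable.tsum_eq_zero_add sδ]
    have h0 : hc β 0 * ((β + (0:ℕ)) * (β + (0:ℕ) - 1) - β * (β - 1)) * x ^ (0:ℕ) = 0 := by
      push_cast; ring
    rw [h0, zero_add]
    refine tsum_congr fun n => ?_
    have hr := hc_rec hβ n
    push_cast
    linear_combination x ^ (n + 1) * hr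
  linear_combination E2 - E3 - E1 - E0 + x ^ β * key
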